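/- arXiv:1510.03033 — 2 statements merged into one kernel-verified Lean document; each statement's English description precedes it below -/
import Mathlib

section
/- For every composition I = (i_1, …, i_r) of n with r ≥ 2 and every real number q, the reduced polynomials P satisfy q · i_1 · P_I(q) + P_{(i_1+i_2, i_3, …, i_r)}(q) = i_1 · P_I(q) + (n!/(n−i_1)!) · q^{i_1} · P_{(i_2, …, i_r)}(q), where P_{(i_2,…,i_r)} is computed for the integer n − i_1. -/
/-- `G q [i_k, …, i_1] t` is the iterated integral
`G_{(i_1,…,i_k)}(t) = ∫_q^t s^{i_k−1} G_{(i_1,…,i_{k−1})}(s) ds`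
(the list argument is the composition read in reverse). -/
noncomputable def G (q : ℝ) : List ℕ → ℝ → ℝ
  | [], _ => 1
  | i :: J, t => ∫ s in q..t, s ^ (i - 1) * G q J s

/-- The composition polynomial `g_I(q) = G_{(i_1,…,i_r)}(1)`. -/
noncomputable def g (q : ℝ) (I : List ℕ) : ℝ := G q I.reverse 1

/-- `P_I(q) = m! · g_I(q)/(1−q)^{ℓ(I)}` for a composition `I` of `m`. -/
noncomputable def P (q : ℝ) (m : ℕ) (I : List ℕ) : ℝ :=
  (Nat.factorial m : ℝ) * g q I / (1 - q) ^ I.length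

lemma G_continuous (q : ℝ) (M : List ℕ) : Continuous (G q M) := by
  induction M with
  | nil => exact continuous_const
  | cons i M ih =>
      have h : Continuous fun s : ℝ => s ^ (i - 1) * G q M s :=
        (continuous_pow _).mul ih
      have : Continuous fun t : ℝ => ∫ s in q..t, s ^ (i - 1) * G q M s :=
        intervalIntegral.continuous_primitive (fun a b => h.intervalIntegrable a b) q
      simpa [G] using this

lemma G_integrable (q a b : ℝ) (i : ℕ) (M : List ℕ) :
    IntervalIntegrable (fun s : ℝ => s ^ (i - 1) * G q M s) MeasureTheory.volume a b :=
  ((continuous_pow _).mul (G_continuous q M)).intervalIntegrable a b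

lemma G_single (q : ℝ) (i : ℕ) (hi : 0 < i) (s : ℝ) :
    G q [i] s = (s ^ i - q ^ i) / i := by
  have : G q [i] s = ∫ u in q..s, u ^ (i - 1) := by simp [G]
  rw [this, integral_pow, Nat.sub_add_cancel hi]
  congr 1
  rw [Nat.cast_sub hi]
  norm_num

lemma key (q : ℝ) (i₁ i₂ : ℕ) (h₁ : 0 < i₁) (h₂ : 0 < i₂) (L : List ℕ) (t : ℝ) :
    G q (L ++ [i₁ + i₂]) t =
      (i₁ : ℝ) * G q (L ++ [i₂, i₁]) t + q ^ i₁ * G q (L ++ [i₂]) t := by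
  induction L generalizing t with
  | nil =>
      show (∫ s in q..t, s ^ (i₁ + i₂ - 1) * G q [] s) =
        (i₁ : ℝ) * (∫ s in q..t, s ^ (i₂ - 1) * G q [i₁] s) +
          q ^ i₁ * ∫ s in q..t, s ^ (i₂ - 1) * G q [] s
      rw [← intervalIntegral.integral_const_mul, ← intervalIntegral.integral_const_mul,
        ← intervalIntegral.integral_add
          ((G_integrable q q t i₂ [i₁]).const_mul _)
          ((G_integrable q q t i₂ []).const_mul _)]
      apply intervalIntegral.integral_congr
      intro s _
      dsimp only
      have hi₁ : (i₁ : ℝ) ≠ 0 := Nat.cast_ne_zero.mpr h₁.ne'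
      rw [G_single q i₁ h₁ s]
      show s ^ (i₁ + i₂ - 1) * G q [] s =
        (i₁ : ℝ) * (s ^ (i₂ - 1) * ((s ^ i₁ - q ^ i₁) / i₁)) + q ^ i₁ * (s ^ (i₂ - 1) * G q [] s)
      have hexp : i₁ + i₂ - 1 = (i₂ - 1) + i₁ := by omega
      simp only [G, mul_one]
      rw [hexp, pow_add]
      field_simp
      ring
  | cons j L ih =>
      show (∫ s in q..t, s ^ (j - 1) * G q (L ++ [i₁ + i₂]) s) =
        (i₁ : ℝ) * (∫ s in q..t, s ^ (j - 1) * G q (L ++ [i₂, i₁]) s) +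
          q ^ i₁ * ∫ s in q..t, s ^ (j - 1) * G q (L ++ [i₂]) s
      rw [← intervalIntegral.integral_const_mul, ← intervalIntegral.integral_const_mul,
        ← intervalIntegral.integral_add
          ((G_integrable q q t j (L ++ [i₂, i₁])).const_mul _)
          ((G_integrable q q t j (L ++ [i₂])).const_mul _)]
      apply intervalIntegral.integral_congr
      intro s _
      dsimp only
      rw [ih s]
      ring

lemma g_rec (q : ℝ) (i₁ i₂ : ℕ) (h₁ : 0 < i₁) (h₂ : 0 < i₂) (J : List ℕ) :
    g q ((i₁ + i₂) :: J) = (i₁ : ℝ) * g q (i₁ :: i₂ :: J) + q ^ i₁ * g q (i₂ :: J) := by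
  have := key q i₁ i₂ h₁ h₂ J.reverse 1
  simpa [g, List.reverse_cons, List.append_assoc] using this

/-- the recursion
`q·i₁·P_I(q) + P_{(i₁+i₂,i₃,…,i_r)}(q) = i₁·P_I(q) + (n!/(n−i₁)!)·q^{i₁}·P_{(i₂,…,i_r)}(q)`. -/
theorem reduced_composition_polynomial_recursion
    (n i₁ i₂ : ℕ) (J : List ℕ) (h₁ : 0 < i₁) (h₂ : 0 < i₂) (hJ : ∀ j ∈ J, 0 < j)
    (hsum : (i₁ :: i₂ :: J).sum = n) (q : ℝ) :
    q * i₁ * P q n (i₁ :: i₂ :: J) + P q n ((i₁ + i₂) :: J) =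
      (i₁ : ℝ) * P q n (i₁ :: i₂ :: J) +
        (Nat.factorial n : ℝ) / (Nat.factorial (n - i₁) : ℝ) * q ^ i₁ *
          P q (n - i₁) (i₂ :: J) := by
  by_cases hq : q = 1
  · simp [P, hq]
  · have h1q : (1 : ℝ) - q ≠ 0 := sub_ne_zero.mpr (Ne.symm hq)
    have hfac : (Nat.factorial (n - i₁) : ℝ) ≠ 0 := Nat.cast_ne_zero.mpr (Nat.factorial_ne_zero _)
    simp only [P, List.length_cons]
    rw [g_rec q i₁ i₂ h₁ h₂ J]
    field_simp
    ring
end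

section
/- With S_n and T_n(q) defined in the free ℝ-algebra F as in the context, for every n ≥ 1 and every real number q one has T_n(q) = Σ_I (1−q^{i_1}) · [⋯[[Ψ_{i_1}, Ψ_{i_2}]_{q^{i_2}}, Ψ_{i_3}]_{q^{i_3}}, ⋯, Ψ_{i_r}]_{q^{i_r}} / (i_1 (i_1+i_2) ⋯ (i_1+⋯+i_r)), where the sum ranges over all compositions I = (i_1, …, i_r) of n and [a, b]_t denotes the t-bracket ab − t·ba in F (for r = 1 the iterated bracket is just Ψ_{i_1}). -/
/-- The noncommutative complete symmetric functions `S_n` in the free `ℝ`-algebra on the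
noncommutative power sums `Ψ_1, Ψ_2, …` (the generator `k` of `FreeAlgebra ℝ ℕ`
standing for `Ψ_k`), defined by `S_0 = 1` and `S_n = (1/n) Σ_{k=1}^n S_{n−k} Ψ_k`. -/
noncomputable def S : ℕ → FreeAlgebra ℝ ℕ
  | 0 => 1
  | n + 1 =>
      ((n + 1 : ℝ))⁻¹ • ∑ k ∈ Finset.range (n + 1), S (n - k) * FreeAlgebra.ι ℝ (k + 1)
  decreasing_by exact Nat.lt_succ_of_le (Nat.sub_le n k)

/-- `T_n(q)`, the degree-`n` component of `σ_q^{-1} σ_1`, i.e. of `S_n((1−q)A)`: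
determined by `T_0(q) = 1` and the recursion `S_n = Σ_{k=0}^n q^k S_k T_{n−k}(q)`,
here solved for `T_n(q)`. -/
noncomputable def T (q : ℝ) : ℕ → FreeAlgebra ℝ ℕ
  | 0 => 1
  | n + 1 =>
      S (n + 1) - ∑ k ∈ Finset.range (n + 1), q ^ (k + 1) • (S (k + 1) * T q (n - k))
  decreasing_by exact Nat.lt_succ_of_le (Nat.sub_le n k)

/-- `Ψ^I = Ψ_{i_1} Ψ_{i_2} ⋯ Ψ_{i_r}`. -/
noncomputable def psi (I : List ℕ) : FreeAlgebra ℝ ℕ :=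
  (I.map (FreeAlgebra.ι ℝ)).prod

/-- The `t`-bracket `[a, b]_t = ab − t·ba`. -/
noncomputable def qBracket (t : ℝ) (a b : FreeAlgebra ℝ ℕ) : FreeAlgebra ℝ ℕ :=
  a * b - t • (b * a)

/-- The iterated `q`-bracket
`[⋯[[Ψ_{i₁}, Ψ_{i₂}]_{q^{i₂}}, Ψ_{i₃}]_{q^{i₃}}, ⋯, Ψ_{i_r}]_{q^{i_r}}`
(for `r = 1` it is just `Ψ_{i₁}`). -/
noncomputable def iterBracket (q : ℝ) (i₁ : ℕ) (rest : List ℕ) : FreeAlgebra ℝ ℕ :=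
  rest.foldl (fun acc i => qBracket (q ^ i) acc (FreeAlgebra.ι ℝ i)) (FreeAlgebra.ι ℝ i₁)

/-- `π_u(I) = i_1 (i_1+i_2) ⋯ (i_1+⋯+i_r)`, the product of the partial sums of `I`. -/
def partialSumsProd (I : List ℕ) : ℕ :=
  ((List.range I.length).map fun k => (I.take (k + 1)).sum).prod

abbrev FA := FreeAlgebra ℝ ℕ

lemma S_zero : S 0 = 1 := by rw [S]
lemma T_zero (q : ℝ) : T q 0 = 1 := by rw [T]

lemma nS (n : ℕ) : (n : ℝ) • S n = ∑ i ∈ Finset.range n, S i * FreeAlgebra.ι ℝ (n - i) := by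
  cases n with
  | zero => simp
  | succ n =>
    rw [S, smul_smul]
    push_cast
    rw [mul_inv_cancel₀ (by positivity), one_smul]
    rw [← Finset.sum_range_reflect]
    apply Finset.sum_congr rfl; intro k hk
    rw [Finset.mem_range] at hk
    congr 2 <;> omega

lemma S_eq (q : ℝ) (n : ℕ) : S n = ∑ k ∈ Finset.range (n+1), q^k • (S k * T q (n - k)) := by
  cases n with
  | zero => simp [S_zero, T_zero]
  | succ n =>
    rw [Finset.sum_range_succ']
    have h0 : q ^ 0 • (S 0 * T q (n + 1 - 0)) = T q (n+1) := by simp [S_zero]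
    rw [h0, T]
    simp only [Nat.succ_sub_succ_eq_sub]
    abel

open Finset PowerSeries in
noncomputable def DD (f : PowerSeries FA) : PowerSeries FA :=
  PowerSeries.mk fun n => (n : ℝ) • PowerSeries.coeff n f

lemma coeff_DD (n : ℕ) (f : PowerSeries FA) :
    PowerSeries.coeff n (DD f) = (n : ℝ) • PowerSeries.coeff n f :=
  PowerSeries.coeff_mk _ _

lemma DD_mul (f g : PowerSeries FA) : DD (f * g) = DD f * g + f * DD g := by
  ext n
  simp only [coeff_DD, map_add, PowerSeries.coeff_mul, Finset.smul_sum]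
  rw [← Finset.sum_add_distrib]
  apply Finset.sum_congr rfl
  rintro ⟨a, b⟩ hab
  rw [Finset.HasAntidiagonal.mem_antidiagonal] at hab
  simp only [coeff_DD]
  rw [← hab]
  push_cast
  rw [add_smul, smul_mul_assoc, mul_smul_comm]

noncomputable def sig : PowerSeries FA := PowerSeries.mk S
noncomputable def sigq (q : ℝ) : PowerSeries FA := PowerSeries.mk fun n => q ^ n • S n
noncomputable def tau (q : ℝ) : PowerSeries FA := PowerSeries.mk (T q)
noncomputable def psiS : PowerSeries FA :=
  PowerSeries.mk fun n => if n = 0 then 0 else FreeAlgebra.ι ℝ n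
noncomputable def psiqS (q : ℝ) : PowerSeries FA :=
  PowerSeries.mk fun n => q ^ n • (if n = 0 then 0 else FreeAlgebra.ι ℝ n)

lemma coeff_mul_psiS (f : PowerSeries FA) (n : ℕ) :
    PowerSeries.coeff n (f * psiS) =
      ∑ i ∈ Finset.range n, PowerSeries.coeff i f * FreeAlgebra.ι ℝ (n - i) := by
  rw [PowerSeries.coeff_mul, Finset.Nat.sum_antidiagonal_eq_sum_range_succ_mk,
    Finset.sum_range_succ]
  simp only [psiS, PowerSeries.coeff_mk, Nat.sub_self, if_pos rfl, ite_true, mul_zero, add_zero]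
  apply Finset.sum_congr rfl
  intro i hi
  rw [Finset.mem_range] at hi
  rw [if_neg (by omega)]

lemma DD_sig : DD sig = sig * psiS := by
  ext n
  rw [coeff_DD, coeff_mul_psiS]
  simpa only [sig, PowerSeries.coeff_mk] using nS n

lemma DD_sigq (q : ℝ) : DD (sigq q) = sigq q * psiqS q := by
  ext n
  rw [coeff_DD, PowerSeries.coeff_mul, Finset.Nat.sum_antidiagonal_eq_sum_range_succ_mk,
    Finset.sum_range_succ]
  simp only [sigq, psiqS, PowerSeries.coeff_mk, Nat.sub_self, if_pos rfl, ite_true, smul_zero, mul_zero,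
    add_zero]
  rw [smul_comm, nS, Finset.smul_sum]
  apply Finset.sum_congr rfl
  intro i hi
  rw [Finset.mem_range] at hi
  rw [if_neg (by omega), smul_mul_assoc, mul_smul_comm, smul_smul, ← pow_add]
  congr 2
  omega

lemma sig_eq (q : ℝ) : sig = sigq q * tau q := by
  ext n
  rw [PowerSeries.coeff_mul, Finset.Nat.sum_antidiagonal_eq_sum_range_succ_mk]
  simp only [sig, sigq, tau, PowerSeries.coeff_mk]
  rw [S_eq q n]
  apply Finset.sum_congr rfl
  intro i _
  rw [smul_mul_assoc]

lemma cancel (f g : PowerSeries FA) (hf : PowerSeries.constantCoeff f = 1)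
    (h : f * g = 0) : g = 0 := by
  ext n
  induction n using Nat.strong_induction_on with
  | _ n ih =>
    have hc := congrArg (PowerSeries.coeff n) h
    rw [PowerSeries.coeff_mul, Finset.Nat.sum_antidiagonal_eq_sum_range_succ_mk,
      Finset.sum_range_succ', map_zero] at hc
    rw [Finset.sum_eq_zero (fun k hk => by
      rw [Finset.mem_range] at hk
      rw [ih (n - (k + 1)) (by omega), map_zero, mul_zero])] at hc
    rw [zero_add, Nat.sub_zero, PowerSeries.coeff_zero_eq_constantCoeff_apply, hf,
      one_mul] at hc
    simpa using hc

lemma const_sigq (q : ℝ) : PowerSeries.constantCoeff (sigq q) = 1 := by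
  rw [← PowerSeries.coeff_zero_eq_constantCoeff_apply]
  simp [sigq, S_zero]

lemma tau_eq (q : ℝ) : DD (tau q) + psiqS q * tau q = tau q * psiS := by
  have h4 : sigq q * (DD (tau q) + psiqS q * tau q - tau q * psiS) = 0 := by
    have e1 : DD sig = sigq q * psiqS q * tau q + sigq q * DD (tau q) := by
      rw [sig_eq q, DD_mul, DD_sigq]
    have e2 : DD sig = sigq q * (tau q * psiS) := by
      rw [DD_sig, sig_eq q, mul_assoc]
    rw [mul_sub, mul_add, ← mul_assoc]
    rw [← e2, e1]
    abel
  have := cancel _ _ (const_sigq q) h4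
  rwa [sub_eq_zero] at this

lemma T_rec (q : ℝ) (n : ℕ) :
    (n : ℝ) • T q n = ∑ k ∈ Finset.range n,
      (T q (n - 1 - k) * FreeAlgebra.ι ℝ (k + 1)
        - q ^ (k + 1) • (FreeAlgebra.ι ℝ (k + 1) * T q (n - 1 - k))) := by
  have h := congrArg (PowerSeries.coeff n) (tau_eq q)
  rw [map_add, coeff_DD, coeff_mul_psiS] at h
  have hpsiq : PowerSeries.coeff n (psiqS q * tau q) =
      ∑ k ∈ Finset.range n, q ^ (k + 1) • (FreeAlgebra.ι ℝ (k + 1) * T q (n - 1 - k)) := by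
    rw [PowerSeries.coeff_mul, Finset.Nat.sum_antidiagonal_eq_sum_range_succ_mk,
      Finset.sum_range_succ']
    simp only [psiqS, tau, PowerSeries.coeff_mk, pow_zero, if_pos rfl, ite_true, smul_zero, zero_mul,
      add_zero, one_smul, Nat.sub_zero]
    apply Finset.sum_congr rfl
    intro k hk
    rw [Finset.mem_range] at hk
    rw [if_neg (by omega), smul_mul_assoc]
    congr 3
    omega
  rw [hpsiq] at h
  have htau : ∀ i, PowerSeries.coeff i (tau q) = T q i := fun i => PowerSeries.coeff_mk _ _
  simp only [htau] at h
  rw [Finset.sum_sub_distrib, eq_sub_iff_add_eq, h,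
    ← Finset.sum_range_reflect (fun i => T q i * FreeAlgebra.ι ℝ (n - i)) n]
  apply Finset.sum_congr rfl
  intro k hk
  rw [Finset.mem_range] at hk
  congr 2
  omega

def comps : ℕ → Finset (List ℕ)
  | 0 => {[]}
  | n + 1 => (Finset.range (n + 1)).biUnion fun k => (comps (n - k)).image (· ++ [k + 1])
  decreasing_by exact Nat.lt_succ_of_le (Nat.sub_le n k)

lemma mem_comps : ∀ n I, I ∈ comps n ↔ (∀ i ∈ I, 0 < i) ∧ I.sum = n := by
  intro n
  induction n using Nat.strong_induction_on with
  | _ n ih =>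
    intro I
    match n with
    | 0 =>
      rw [comps]
      simp only [Finset.mem_singleton]
      constructor
      · rintro rfl; simp
      · rintro ⟨hpos, hsum⟩
        match I with
        | [] => rfl
        | a :: t =>
          exfalso
          have := hpos a (by simp)
          simp [List.sum_cons] at hsum
          omega
    | n + 1 =>
      rw [comps]
      simp only [Finset.mem_biUnion, Finset.mem_image, Finset.mem_range]
      constructor
      · rintro ⟨k, hk, J, hJ, rfl⟩
        obtain ⟨hpos, hsum⟩ := (ih (n - k) (by omega) J).mp hJ
        constructor
        · intro i hi
          rw [List.mem_append] at hi
          rcases hi with hi | hi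
          · exact hpos i hi
          · simp at hi; omega
        · rw [List.sum_append]; simp; omega
      · rintro ⟨hpos, hsum⟩
        rcases List.eq_nil_or_concat I with rfl | ⟨J, b, rfl⟩
        · simp at hsum
        · rw [List.concat_eq_append] at hsum hpos ⊢
          have hb : 0 < b := hpos b (by simp)
          rw [List.sum_append] at hsum
          simp only [List.sum_cons, List.sum_nil, add_zero] at hsum
          refine ⟨b - 1, by omega, J, ?_, ?_⟩
          · refine (ih (n - (b - 1)) (by omega) J).mpr ⟨fun i hi => hpos i (by simp [hi]), by omega⟩
          · have hb1 : b - 1 + 1 = b := by omega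
            simp only [hb1]

noncomputable def fI (q : ℝ) (I : List ℕ) : FreeAlgebra ℝ ℕ :=
  ((1 - q ^ I.headD 1) / (partialSumsProd I : ℝ)) • iterBracket q (I.headD 1) I.tail

noncomputable def RR (q : ℝ) (n : ℕ) : FreeAlgebra ℝ ℕ := ∑ I ∈ comps n, fI q I

lemma psp_append (J : List ℕ) (k : ℕ) :
    partialSumsProd (J ++ [k]) = partialSumsProd J * (J.sum + k) := by
  unfold partialSumsProd
  rw [List.length_append]
  simp only [List.length_cons, List.length_nil, zero_add]
  rw [List.range_succ, List.map_append, List.prod_append]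
  congr 1
  · congr 1
    apply List.map_congr_left
    intro j hj
    rw [List.mem_range] at hj
    rw [List.take_append_of_le_length (by omega)]
  · have h1 : J.length + 1 = (J ++ [k]).length := by simp
    simp only [List.map_cons, List.map_nil, List.prod_cons, List.prod_nil, mul_one, h1,
      List.take_length, List.sum_append, List.sum_cons, List.sum_nil, add_zero]

lemma psp_pos (J : List ℕ) (hpos : ∀ i ∈ J, 0 < i) : 0 < partialSumsProd J := by
  apply List.prod_pos
  intro a ha
  simp only [List.mem_map, List.mem_range] at ha
  obtain ⟨j, hj, rfl⟩ := ha
  apply List.sum_pos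
  · intro x hx; exact hpos x (List.mem_of_mem_take hx)
  · have : (J.take (j + 1)).length = j + 1 := by
      rw [List.length_take]; omega
    intro h
    rw [h] at this
    simp at this

lemma iterB_append (q : ℝ) (h : ℕ) (t : List ℕ) (k : ℕ) :
    iterBracket q h (t ++ [k]) = qBracket (q ^ k) (iterBracket q h t) (FreeAlgebra.ι ℝ k) := by
  unfold iterBracket
  rw [List.foldl_append]
  rfl

lemma qBracket_smul (t c : ℝ) (a b : FreeAlgebra ℝ ℕ) :
    qBracket t (c • a) b = c • qBracket t a b := by
  unfold qBracket
  rw [smul_mul_assoc, mul_smul_comm, smul_comm t c, smul_sub]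

lemma qBracket_sum {X : Type*} (t : ℝ) (s : Finset X) (f : X → FreeAlgebra ℝ ℕ)
    (b : FreeAlgebra ℝ ℕ) :
    qBracket t (∑ x ∈ s, f x) b = ∑ x ∈ s, qBracket t (f x) b := by
  unfold qBracket
  rw [Finset.sum_mul, Finset.mul_sum, Finset.smul_sum, ← Finset.sum_sub_distrib]

lemma fI_single (q : ℝ) (k : ℕ) :
    fI q [k] = ((1 - q ^ k) / (k : ℝ)) • FreeAlgebra.ι ℝ k := by
  unfold fI partialSumsProd iterBracket
  simp

lemma fI_append (q : ℝ) (J : List ℕ) (k : ℕ) (hJ : J ≠ []) :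
    fI q (J ++ [k]) =
      ((J.sum + k : ℕ) : ℝ)⁻¹ • qBracket (q ^ k) (fI q J) (FreeAlgebra.ι ℝ k) := by
  obtain ⟨a, t, rfl⟩ := List.exists_cons_of_ne_nil hJ
  unfold fI
  rw [qBracket_smul, smul_smul]
  simp only [List.cons_append, List.headD_cons, List.tail_cons]
  rw [iterB_append]
  have hpsp : partialSumsProd (a :: (t ++ [k])) = partialSumsProd (a :: t) * ((a :: t).sum + k) := by
    rw [← List.cons_append, psp_append]
  rw [hpsp]
  congr 1
  rw [Nat.cast_mul, div_mul_eq_div_div]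
  exact (inv_mul_eq_div _ _).symm

lemma comps_disj (n : ℕ) :
    (↑(Finset.range (n + 1)) : Set ℕ).PairwiseDisjoint
      (fun k => (comps (n - k)).image (· ++ [k + 1])) := by
  intro k _ k' _ hne
  rw [Function.onFun, Finset.disjoint_left]
  intro I hI hI'
  simp only [Finset.mem_image] at hI hI'
  obtain ⟨J, _, rfl⟩ := hI
  obtain ⟨J', _, hJ'⟩ := hI'
  apply hne
  have := congrArg List.getLast? hJ'
  rw [List.getLast?_concat, List.getLast?_concat] at this
  simpa using this.symm

lemma RR_rec (q : ℝ) (n : ℕ) :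
    ((n + 1 : ℕ) : ℝ) • RR q (n + 1) =
      ∑ k ∈ Finset.range n, qBracket (q ^ (k + 1)) (RR q (n - k)) (FreeAlgebra.ι ℝ (k + 1))
        + (1 - q ^ (n + 1)) • FreeAlgebra.ι ℝ (n + 1) := by
  have hN : ((n + 1 : ℕ) : ℝ) ≠ 0 := by positivity
  rw [RR, comps, Finset.sum_biUnion (comps_disj n)]
  have himg : ∀ k ∈ Finset.range (n + 1),
      ∑ I ∈ (comps (n - k)).image (· ++ [k + 1]), fI q I
        = ∑ J ∈ comps (n - k), fI q (J ++ [k + 1]) :=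
    fun k _ => Finset.sum_image (fun x _ y _ h => List.append_left_injective _ h)
  rw [Finset.sum_congr rfl himg, Finset.sum_range_succ]
  have hlast : ∑ J ∈ comps (n - n), fI q (J ++ [n + 1])
      = ((1 - q ^ (n + 1)) / ((n + 1 : ℕ) : ℝ)) • FreeAlgebra.ι ℝ (n + 1) := by
    rw [Nat.sub_self, comps, Finset.sum_singleton, List.nil_append, fI_single]
  have hmid : ∀ k ∈ Finset.range n,
      ∑ J ∈ comps (n - k), fI q (J ++ [k + 1])
        = ((n + 1 : ℕ) : ℝ)⁻¹ • qBracket (q ^ (k + 1)) (RR q (n - k)) (FreeAlgebra.ι ℝ (k + 1)) := by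
    intro k hk
    rw [Finset.mem_range] at hk
    have hstep : ∀ J ∈ comps (n - k), fI q (J ++ [k + 1])
        = ((n + 1 : ℕ) : ℝ)⁻¹ • qBracket (q ^ (k + 1)) (fI q J) (FreeAlgebra.ι ℝ (k + 1)) := by
      intro J hJ
      obtain ⟨hpos, hsum⟩ := (mem_comps (n - k) J).mp hJ
      have hne : J ≠ [] := by
        intro h; rw [h] at hsum; simp at hsum; omega
      rw [fI_append q J (k + 1) hne, show J.sum + (k + 1) = n + 1 by omega]
    rw [Finset.sum_congr rfl hstep, ← Finset.smul_sum, RR, qBracket_sum]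
  rw [Finset.sum_congr rfl hmid, hlast, smul_add, Finset.smul_sum]
  congr 1
  · apply Finset.sum_congr rfl
    intro k _
    rw [smul_smul, mul_inv_cancel₀ hN, one_smul]
  · rw [smul_smul, mul_div_cancel₀ _ hN]

lemma T_eq_RR (q : ℝ) : ∀ n, 1 ≤ n → T q n = RR q n := by
  intro n
  induction n using Nat.strong_induction_on with
  | _ n ih =>
    intro hn
    obtain ⟨m, rfl⟩ : ∃ m, n = m + 1 := ⟨n - 1, by omega⟩
    have hT := T_rec q (m + 1)
    simp only [Nat.add_sub_cancel] at hT
    rw [Finset.sum_range_succ, Nat.sub_self, T_zero, one_mul, mul_one] at hT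
    have hsub : FreeAlgebra.ι ℝ (m + 1) - q ^ (m + 1) • FreeAlgebra.ι ℝ (m + 1)
        = (1 - q ^ (m + 1)) • FreeAlgebra.ι ℝ (m + 1) := by
      rw [sub_smul, one_smul]
    rw [hsub] at hT
    have hmid : ∀ x ∈ Finset.range m,
        T q (m - x) * FreeAlgebra.ι ℝ (x + 1)
            - q ^ (x + 1) • (FreeAlgebra.ι ℝ (x + 1) * T q (m - x))
          = qBracket (q ^ (x + 1)) (RR q (m - x)) (FreeAlgebra.ι ℝ (x + 1)) := by
      intro x hx
      rw [Finset.mem_range] at hx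
      rw [ih (m - x) (by omega) (by omega)]
      rfl
    rw [Finset.sum_congr rfl hmid] at hT
    have h2 := hT.trans (RR_rec q m).symm
    have h3 := congrArg (fun z => ((m + 1 : ℕ) : ℝ)⁻¹ • z) h2
    simpa [smul_smul, inv_mul_cancel₀ (show ((m : ℝ) + 1) ≠ 0 by positivity)] using h3

/-- for `n ≥ 1`,
`T_n(q) = Σ_{I ⊨ n} (1−q^{i₁}) [⋯[[Ψ_{i₁},Ψ_{i₂}]_{q^{i₂}},Ψ_{i₃}]_{q^{i₃}},⋯,Ψ_{i_r}]_{q^{i_r}}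
           / (i₁ (i₁+i₂) ⋯ (i₁+⋯+i_r))`.
(Every composition of `n ≥ 1` is nonempty, so `I.headD 1` is its first part `i₁` and
`I.tail` the list of remaining parts.) -/
theorem one_sub_q_transform_iterated_brackets (n : ℕ) (hn : 1 ≤ n) (q : ℝ) :
    T q n = ∑ᶠ I ∈ {I : List ℕ | (∀ i ∈ I, 0 < i) ∧ I.sum = n},
      ((1 - q ^ I.headD 1) / (partialSumsProd I : ℝ)) • iterBracket q (I.headD 1) I.tail := by
  
  have hset : {I : List ℕ | (∀ i ∈ I, 0 < i) ∧ I.sum = n} = ↑(comps n) := by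
    ext I
    simp [mem_comps]
  rw [hset, finsum_mem_coe_finset]
  exact T_eq_RR q n hn
end
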